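/- Let ω be a nonzero vector in ℝ^n with nonnegative entries, and suppose that for every index l, the sum of the entries of ω over all indices different from l is at least (q+1)·ω_l. Then the AWGNC pseudo-weight of ω, defined as wₚ(ω) = (∑ᵢ ωᵢ)² / (∑ᵢ ωᵢ²), satisfies wₚ(ω) ≥ q + 2. -/

import Mathlib

open Finset

theorem pseudoweight_lower_bound (n : ℕ) (q : ℝ) (ω : Fin n → ℝ)
    (hω : ω ≠ 0) (hnn : ∀ i, 0 ≤ ω i)
    (hcone : ∀ l, ∑ i ∈ univ \ {l}, ω i ≥ (q + 1) * ω l) :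
    (∑ i, ω i) ^ 2 / (∑ i, ω i ^ 2) ≥ q + 2 := by
  have hsq : 0 < ∑ i, ω i ^ 2 := by
    obtain ⟨j, hj⟩ : ∃ j, ω j ≠ 0 := by
      by_contra h
      push_neg at h
      exact hω (funext h)
    have : 0 < ω j ^ 2 := by positivity
    exact Finset.sum_pos' (fun i _ => by positivity) ⟨j, mem_univ j, this⟩
  set S := ∑ i, ω i with hS
  have hkey : ∀ l, S ≥ (q + 2) * ω l := by
    intro l
    have h := hcone l
    have hsplit : S = ∑ i ∈ univ \ {l}, ω i + ω l := by
      rw [hS, ← Finset.sum_sdiff (Finset.subset_univ {l}), Finset.sum_singleton]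
    rw [hsplit]; nlinarith [hnn l]
  rcases le_or_gt (q + 2) 0 with hq | hq
  · have : 0 ≤ S ^ 2 / (∑ i, ω i ^ 2) := by positivity
    linarith
  · rw [ge_iff_le, le_div_iff₀ hsq]
    have hbound : ∑ i, ω i ^ 2 ≤ ∑ i, ω i * (S / (q + 2)) := by
      apply Finset.sum_le_sum
      intro i _
      have := hkey i
      have h1 : ω i ≤ S / (q + 2) := by rw [le_div_iff₀ hq]; linarith
      calc ω i ^ 2 = ω i * ω i := sq (ω i)
        _ ≤ ω i * (S / (q + 2)) := mul_le_mul_of_nonneg_left h1 (hnn i)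
    have : ∑ i, ω i * (S / (q + 2)) = S * (S / (q + 2)) := by
      rw [← Finset.sum_mul]
    rw [this] at hbound
    have hS0 : 0 ≤ S := Finset.sum_nonneg fun i _ => hnn i
    calc (q + 2) * ∑ i, ω i ^ 2 ≤ (q + 2) * (S * (S / (q + 2))) :=
          mul_le_mul_of_nonneg_left hbound (le_of_lt hq)
      _ = S ^ 2 := by field_simp
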